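/- arXiv:1103.0269 — 2 statements merged into one kernel-verified Lean document; each statement's English description precedes it below -/
import Mathlib

section
/- Let ρ be a probability measure on [0,1], let (U_i)_{i≥1} be i.i.d. random variables with law ρ, set U₀ := 0, and let π be a (deterministic) distinguished partition of ℤ₊. Then for every n ≥ 1, all bounded measurable functions f₁,…,f_n on [0,1], and every permutation σ of ℤ₊ with finite support and σ(0) = 0: E[∏_{i=1}^n f_i(U_{α_π(σ(i))})] = E[∏_{i=1}^n f_i(U_{α_{σπ}(i)})]. -/
open MeasureTheory

/-- `b : ℕ → Set ℕ` is (the block function of) a distinguished partition of ℤ₊ = ℕ: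
the blocks are pairwise disjoint, cover ℕ, and are indexed in increasing order of their
least element (empty blocks being assigned to the remaining indices, after all
nonempty ones). -/
def IsDistPartition (b : ℕ → Set ℕ) : Prop :=
  (∀ i j, i ≠ j → Disjoint (b i) (b j)) ∧
  (∀ k, ∃ i, k ∈ b i) ∧
  (∀ i j, i < j → (b j).Nonempty → (b i).Nonempty ∧ sInf (b i) < sInf (b j))

/-- `α_π(k)`: the index of the block of `π` containing `k`. -/
noncomputable def blockIndex (b : ℕ → Set ℕ) (k : ℕ) : ℕ := sInf {i | k ∈ b i}

lemma IsDistPartition.blockIndex_eq {b : ℕ → Set ℕ} (hb : IsDistPartition b)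
    {i k : ℕ} (h : i ∈ b k) : blockIndex b i = k := by
  have hset : {j | i ∈ b j} = {k} := by
    ext j
    simp only [Set.mem_setOf_eq, Set.mem_singleton_iff]
    constructor
    · intro hj
      by_contra hne
      exact (Set.disjoint_left.mp (hb.1 j k hne)) hj h
    · rintro rfl; exact h
  rw [blockIndex, hset]
  simp

lemma IsDistPartition.mem_block {b : ℕ → Set ℕ} (hb : IsDistPartition b) (i : ℕ) :
    i ∈ b (blockIndex b i) := by
  obtain ⟨k, hk⟩ := hb.2.1 i
  rw [hb.blockIndex_eq hk]; exact hk

lemma IsDistPartition.zero_mem {b : ℕ → Set ℕ} (hb : IsDistPartition b) : 0 ∈ b 0 := by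
  obtain ⟨k, hk⟩ := hb.2.1 0
  rcases Nat.eq_zero_or_pos k with rfl | hkpos
  · exact hk
  · obtain ⟨-, hlt⟩ := hb.2.2 0 k hkpos ⟨0, hk⟩
    have : sInf (b k) = 0 := Nat.le_zero.mp (Nat.sInf_le hk)
    omega

lemma aux_integral_prod {Ω : Type*} [MeasurableSpace Ω] (P : Measure Ω) [IsProbabilityMeasure P]
    (U : ℕ → Ω → ℝ) (hUmeas : ∀ i, Measurable (U i))
    (hUindep : ProbabilityTheory.iIndepFun U P)
    (φ : ℕ → ℝ → ℝ) (hφ : ∀ j, Measurable (φ j)) (e : ℕ → ℕ) :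
    ∀ s : Finset ℕ, Set.InjOn e ↑s →
      ∫ ω, ∏ j ∈ s, φ j (U (e j) ω) ∂P = ∏ j ∈ s, ∫ ω, φ j (U (e j) ω) ∂P := by
  classical
  intro s
  induction s using Finset.induction_on with
  | empty => simp
  | @insert a s ha ih =>
    intro he
    have hsub : Set.InjOn e ↑s := he.mono (by simp [Finset.coe_insert, Set.subset_insert])
    have hea : e a ∉ s.image e := by
      intro h
      obtain ⟨j, hj, hje⟩ := Finset.mem_image.mp h
      exact ha (he (by simp) (by simp [hj]) hje.symm ▸ hj)
    have hdisj : Disjoint ({e a} : Finset ℕ) (s.image e) :=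
      Finset.disjoint_singleton_left.mpr hea
    have hIF := hUindep.indepFun_finset {e a} (s.image e) hdisj hUmeas
    set G1 : (↑({e a} : Finset ℕ) → ℝ) → ℝ :=
      fun x => φ a (x ⟨e a, Finset.mem_singleton_self _⟩) with hG1
    set G2 : (↑(s.image e) → ℝ) → ℝ :=
      fun x => ∏ j ∈ s.attach, φ j (x ⟨e j, Finset.mem_image_of_mem e j.2⟩) with hG2
    have hG1m : Measurable G1 := (hφ a).comp (measurable_pi_apply _)
    have hG2m : Measurable G2 :=
      Finset.measurable_prod _ fun j _ => (hφ j).comp (measurable_pi_apply (⟨e ↑j, Finset.mem_image_of_mem e j.2⟩ : ↑(s.image e)))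
    have hind := hIF.comp hG1m hG2m
    have heq1 : (G1 ∘ fun ω (i : ↑({e a} : Finset ℕ)) => U ↑i ω)
        = fun ω => φ a (U (e a) ω) := rfl
    have heq2 : (G2 ∘ fun ω (i : ↑(s.image e)) => U ↑i ω)
        = fun ω => ∏ j ∈ s, φ j (U (e j) ω) := by
      funext ω
      simp only [Function.comp_apply, hG2]
      exact Finset.prod_attach s fun j => φ j (U (e j) ω)
    rw [heq1, heq2] at hind
    have hmul := ProbabilityTheory.IndepFun.integral_fun_mul_eq_mul_integral hind
      ((hφ a).comp (hUmeas _)).aestronglyMeasurable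
      ((Finset.measurable_prod s fun j _ => (hφ j).comp (hUmeas _)).aestronglyMeasurable)
    simp only [Finset.prod_insert ha]
    calc ∫ ω, φ a (U (e a) ω) * ∏ j ∈ s, φ j (U (e j) ω) ∂P
        = (∫ ω, φ a (U (e a) ω) ∂P) * ∫ ω, ∏ j ∈ s, φ j (U (e j) ω) ∂P := hmul
      _ = (∫ ω, φ a (U (e a) ω) ∂P) * ∏ j ∈ s, ∫ ω, φ j (U (e j) ω) ∂P := by rw [ih hsub]

/-- Let `ρ` be a probability measure on `[0,1]`, `(U_i)_{i≥1}` i.i.d. with law `ρ`,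
`U₀ := 0`, and `π` a deterministic distinguished partition of ℤ₊.  Then for every
`n ≥ 1`, all bounded measurable `f₁,…,f_n` on `[0,1]`, and every permutation `σ` of ℤ₊
with finite support and `σ(0) = 0`:
`E[∏_{i=1}^n f_i(U_{α_π(σ(i))})] = E[∏_{i=1}^n f_i(U_{α_{σπ}(i)})]`,
where `σπ` is the distinguished partition in which `i` and `j` belong to the same
block if and only if `σ(i)` and `σ(j)` belong to the same block of `π` (here encoded
by quantifying over any distinguished partition `c` with this same-block property). -/
theorem expectation_product_perm
    {Ω : Type*} [MeasurableSpace Ω] (P : Measure Ω) [IsProbabilityMeasure P]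
    (ρ : Measure ℝ) [IsProbabilityMeasure ρ] (hρ : ρ (Set.Icc 0 1) = 1)
    (U : ℕ → Ω → ℝ) (hUmeas : ∀ i, Measurable (U i))
    (hUrange : ∀ i ω, U i ω ∈ Set.Icc (0 : ℝ) 1)
    (hU0 : ∀ ω, U 0 ω = 0)
    (hUindep : ProbabilityTheory.iIndepFun U P)
    (hUlaw : ∀ i, 1 ≤ i → Measure.map (U i) P = ρ)
    (b : ℕ → Set ℕ) (hb : IsDistPartition b)
    (σ : Equiv.Perm ℕ) (hσfin : {x | σ x ≠ x}.Finite) (hσ0 : σ 0 = 0)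
    (c : ℕ → Set ℕ) (hc : IsDistPartition c)
    (hcσ : ∀ i j, (∃ k, i ∈ c k ∧ j ∈ c k) ↔ (∃ k, σ i ∈ b k ∧ σ j ∈ b k))
    (n : ℕ) (hn : 1 ≤ n)
    (f : ℕ → ℝ → ℝ) (hfmeas : ∀ i, Measurable (f i))
    (hfbdd : ∀ i, ∃ C, ∀ x, |f i x| ≤ C) :
    ∫ ω, ∏ i ∈ Finset.Icc 1 n, f i (U (blockIndex b (σ i)) ω) ∂P
      = ∫ ω, ∏ i ∈ Finset.Icc 1 n, f i (U (blockIndex c i) ω) ∂P := by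
  classical
  set g : ℕ → ℕ := fun j => blockIndex b (σ (sInf (c j))) with hg
  -- key identity
  have hkey : ∀ i, blockIndex b (σ i) = g (blockIndex c i) := by
    intro i
    have h1 : i ∈ c (blockIndex c i) := hc.mem_block i
    have h2 : sInf (c (blockIndex c i)) ∈ c (blockIndex c i) := Nat.sInf_mem ⟨i, h1⟩
    obtain ⟨k, hk1, hk2⟩ := (hcσ i (sInf (c (blockIndex c i)))).mp ⟨_, h1, h2⟩
    rw [hb.blockIndex_eq hk1, hg]
    exact (hb.blockIndex_eq hk2).symm
  -- injectivity on nonempty blocks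
  have hinj : ∀ j j', (c j).Nonempty → (c j').Nonempty → g j = g j' → j = j' := by
    intro j j' hj hj' hgg
    have h1 : sInf (c j) ∈ c j := Nat.sInf_mem hj
    have h1' : sInf (c j') ∈ c j' := Nat.sInf_mem hj'
    have hb1 : σ (sInf (c j)) ∈ b (g j) := hb.mem_block _
    have hb2 : σ (sInf (c j')) ∈ b (g j) := by rw [hgg]; exact hb.mem_block _
    obtain ⟨k, hk1, hk2⟩ := (hcσ (sInf (c j)) (sInf (c j'))).mpr ⟨g j, hb1, hb2⟩
    have e1 : j = k := by rw [← hc.blockIndex_eq h1, hc.blockIndex_eq hk1]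
    have e2 : j' = k := by rw [← hc.blockIndex_eq h1', hc.blockIndex_eq hk2]
    omega
  have hg0 : g 0 = 0 := by
    have h0c : 0 ∈ c 0 := hc.zero_mem
    have hsinf : sInf (c 0) = 0 := Nat.le_zero.mp (Nat.sInf_le h0c)
    rw [hg]
    simp only [hsinf, hσ0]
    exact hb.blockIndex_eq hb.zero_mem
  set S : Finset ℕ := (Finset.Icc 1 n).image (blockIndex c) with hS
  have hSne : ∀ j ∈ S, (c j).Nonempty := by
    intro j hj
    obtain ⟨i, -, rfl⟩ := Finset.mem_image.mp hj
    exact ⟨i, hc.mem_block i⟩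
  have hSinj : Set.InjOn g ↑S := fun j hj j' hj' h =>
    hinj j j' (hSne j hj) (hSne j' hj') h
  set φ : ℕ → ℝ → ℝ :=
    fun j y => ∏ i ∈ (Finset.Icc 1 n).filter (fun i => blockIndex c i = j), f i y with hφ
  have hφm : ∀ j, Measurable (φ j) :=
    fun j => Finset.measurable_prod _ fun i _ => hfmeas i
  have hL : ∀ ω, ∏ i ∈ Finset.Icc 1 n, f i (U (blockIndex b (σ i)) ω)
      = ∏ j ∈ S, φ j (U (g j) ω) := by
    intro ω
    rw [← Finset.prod_fiberwise_of_maps_to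
      (fun i hi => Finset.mem_image_of_mem (blockIndex c) hi)
      (fun i => f i (U (blockIndex b (σ i)) ω))]
    refine Finset.prod_congr rfl fun j hj => Finset.prod_congr rfl fun i hi => ?_
    obtain ⟨-, hij⟩ := Finset.mem_filter.mp hi
    rw [hkey i, hij]
  have hR : ∀ ω, ∏ i ∈ Finset.Icc 1 n, f i (U (blockIndex c i) ω)
      = ∏ j ∈ S, φ j (U j ω) := by
    intro ω
    rw [← Finset.prod_fiberwise_of_maps_to
      (fun i hi => Finset.mem_image_of_mem (blockIndex c) hi)
      (fun i => f i (U (blockIndex c i) ω))]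
    refine Finset.prod_congr rfl fun j hj => Finset.prod_congr rfl fun i hi => ?_
    obtain ⟨-, hij⟩ := Finset.mem_filter.mp hi
    rw [hij]
  have hint : ∀ j ∈ S, ∫ ω, φ j (U (g j) ω) ∂P = ∫ ω, φ j (U j ω) ∂P := by
    intro j hj
    rcases Nat.eq_zero_or_pos j with rfl | hjpos
    · rw [hg0]
    · have hgj : 1 ≤ g j := by
        rcases Nat.eq_zero_or_pos (g j) with h0 | h1
        · exfalso
          have := hinj j 0 (hSne j hj) ⟨0, hc.zero_mem⟩ (by rw [h0, hg0])
          omega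
        · exact h1
      rw [← integral_map (hUmeas (g j)).aemeasurable (hφm j).aestronglyMeasurable,
        hUlaw _ hgj, ← hUlaw j hjpos,
        integral_map (hUmeas j).aemeasurable (hφm j).aestronglyMeasurable]
  calc ∫ ω, ∏ i ∈ Finset.Icc 1 n, f i (U (blockIndex b (σ i)) ω) ∂P
      = ∫ ω, ∏ j ∈ S, φ j (U (g j) ω) ∂P := by
        refine integral_congr_ae (Filter.Eventually.of_forall fun ω => ?_)
        exact hL ω
    _ = ∏ j ∈ S, ∫ ω, φ j (U (g j) ω) ∂P :=
        aux_integral_prod P U hUmeas hUindep φ hφm g S hSinj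
    _ = ∏ j ∈ S, ∫ ω, φ j (U j ω) ∂P := Finset.prod_congr rfl hint
    _ = ∫ ω, ∏ j ∈ S, φ j (U j ω) ∂P :=
        (aux_integral_prod P U hUmeas hUindep φ hφm (fun j => j) S
          (Function.injective_id.injOn)).symm
    _ = ∫ ω, ∏ i ∈ Finset.Icc 1 n, f i (U (blockIndex c i) ω) ∂P := by
        refine integral_congr_ae (Filter.Eventually.of_forall fun ω => ?_)
        exact (hR ω).symm
end

section
/- Assume moreover that ν({s ∈ P_m : s_i = 0 for all i ≥ 0}) = 0 and that c₀, c₁ and ν are not all zero (so that Φ(n) > 0 for every integer n ≥ 2 and Ψ(q) > 0 for every real q ≥ 2). Then the series Σ_{n≥2} 1/Φ(n) converges if and only if the integral ∫_2^∞ dq/Ψ(q) converges. -/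
open MeasureTheory

/-- `s ∈ P_m`: `s = (s₀,s₁,s₂,…)` with `s₀ ≥ 0`, `s₁ ≥ s₂ ≥ … ≥ 0`, and
`Σ_{i≥0} s_i ≤ 1`. -/
def MemPm (s : ℕ → ℝ) : Prop :=
  (∀ i, 0 ≤ s i) ∧ (∀ i, 1 ≤ i → s (i + 1) ≤ s i) ∧ Summable s ∧ ∑' i, s i ≤ 1

/-- `Φ(q) = c₀q + (c₁/2)q(q−1) + ∫_{P_m} (q s₀ + Σ_{i≥1} (q s_i − 1 + (1−s_i)^q)) ν(ds)`. -/
noncomputable def Phi (c₀ c₁ : ℝ) (ν : Measure (ℕ → ℝ)) (q : ℕ) : ℝ :=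
  c₀ * q + c₁ / 2 * q * ((q : ℝ) - 1)
    + ∫ s, ((q : ℝ) * s 0 + ∑' i : ℕ, ((q : ℝ) * s (i + 1) - 1 + (1 - s (i + 1)) ^ q)) ∂ν

/-- `Ψ(q) = c₀q + (c₁/2)q² + ∫_{P_m} (q s₀ + Σ_{i≥1} (e^{−q s_i} − 1 + q s_i)) ν(ds)`. -/
noncomputable def Psi (c₀ c₁ : ℝ) (ν : Measure (ℕ → ℝ)) (q : ℝ) : ℝ :=
  c₀ * q + c₁ / 2 * q ^ 2
    + ∫ s, (q * s 0 + ∑' i : ℕ, (Real.exp (-(q * s (i + 1))) - 1 + q * s (i + 1))) ∂ν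

section AuxPhiPsi
open Real MeasureTheory

-- g q x = exp(-(q*x)) - 1 + q*x
lemma gfun_nonneg (y : ℝ) : 0 ≤ exp (-y) - 1 + y := by
  have := add_one_le_exp (-y); linarith

lemma gfun_mono {a b : ℝ} (hab : a ≤ b) (ha : 0 ≤ a) :
    exp (-a) - 1 + a ≤ exp (-b) - 1 + b := by
  have h1 : 1 - (b - a) ≤ exp (-(b-a)) := by have := add_one_le_exp (-(b-a)); linarith
  have h2 : exp (-a) ≤ 1 := exp_le_one_iff.2 (by linarith)
  have h3 : (0:ℝ) < exp (-a) := exp_pos _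
  have h4 : exp (-b) = exp (-a) * exp (-(b-a)) := by rw [← exp_add]; ring_nf
  have h5 : exp (-(b-a)) ≤ 1 := exp_le_one_iff.2 (by linarith)
  nlinarith

lemma gfun_le_sq {y : ℝ} (hy : 0 ≤ y) : exp (-y) - 1 + y ≤ y ^ 2 := by
  have h1 : y + 1 ≤ exp y := add_one_le_exp y
  have h2 : exp (-y) * exp y = 1 := by rw [← exp_add]; simp
  have h3 : (0:ℝ) < exp (-y) := exp_pos _
  have h4 : 1 - y ≤ exp (-y) := by have := add_one_le_exp (-y); linarith
  nlinarith

lemma one_sub_pow_le_exp {x : ℝ} (hx0 : 0 ≤ x) (hx1 : x ≤ 1) (n : ℕ) :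
    (1 - x) ^ n ≤ exp (-(n * x)) := by
  have h : 1 - x ≤ exp (-x) := by have := add_one_le_exp (-x); linarith
  calc (1-x)^n ≤ exp (-x) ^ n := pow_le_pow_left₀ (by linarith) h n
    _ = exp (-(n*x)) := by rw [← exp_nat_mul]; ring_nf

-- key: exp(-((n+1)*x)) ≤ x + (1-x)^(n+2) for x ∈ [0,1]
lemma exp_le_add_pow {x : ℝ} (hx0 : 0 ≤ x) (hx1 : x ≤ 1) (m : ℕ) :
    exp (-((m+1) * x)) ≤ x + (1 - x) ^ (m + 2) := by
  have hD : ∀ y : ℝ, HasDerivAt (fun x : ℝ => x + (1-x)^(m+2) - exp (-((m+1)*x)))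
      (1 + (↑(m+2) * (1-y)^(m+1) * (-1)) - exp (-((m+1)*y)) * (-(m+1))) y := by
    intro y
    have h1 : HasDerivAt (fun x : ℝ => (1-x)^(m+2)) (↑(m+2) * (1-y)^(m+1) * (-1)) y := by
      have := ((hasDerivAt_id y).const_sub 1).fun_pow (m+2)
      simpa using this
    have h2 : HasDerivAt (fun x : ℝ => exp (-((m+1)*x))) (exp (-((m+1)*y)) * (-(m+1))) y := by
      have := (((hasDerivAt_id y).const_mul ((m:ℝ)+1)).fun_neg).exp
      simp only [id_eq, mul_one] at this
      convert this using 2 <;> push_cast <;> ring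
    exact ((hasDerivAt_id y).add h1).sub h2
  have hmono : MonotoneOn (fun x : ℝ => x + (1-x)^(m+2) - exp (-((m+1)*x))) (Set.Icc 0 1) := by
    apply monotoneOn_of_deriv_nonneg (convex_Icc 0 1)
    · exact Continuous.continuousOn (by continuity)
    · intro y hy
      exact ((hD y).differentiableAt).differentiableWithinAt
    · intro y hy
      rw [interior_Icc] at hy
      rw [(hD y).deriv]
      have key : (1-y)^(m+1) ≤ exp (-(((m:ℝ)+1)*y)) := by
        have := one_sub_pow_le_exp hy.1.le hy.2.le (m+1)
        push_cast at this ⊢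
        convert this using 3
      have h1 : (0:ℝ) ≤ 1 - (1-y)^(m+1) := by
        have : (1-y)^(m+1) ≤ 1 := pow_le_one₀ (by linarith [hy.2]) (by linarith [hy.1])
        linarith
      have hm0 : (0:ℝ) ≤ (m:ℝ) := Nat.cast_nonneg m
      have h2 : exp (-(((m:ℝ)+1)*y)) ≤ 1 := exp_le_one_iff.2 (by nlinarith [hy.1.le])
      have he : (0:ℝ) ≤ exp (-(((m:ℝ)+1)*y)) := (exp_pos _).le
      push_cast
      nlinarith
  have h0 : (fun x : ℝ => x + (1-x)^(m+2) - exp (-((m+1)*x))) 0 = 0 := by simp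
  have := hmono (Set.mem_Icc.2 ⟨le_refl 0, zero_le_one⟩) (Set.mem_Icc.2 ⟨hx0, hx1⟩) hx0
  rw [h0] at this
  simp only at this
  linarith


lemma memPm_le_one {s : ℕ → ℝ} (hs : MemPm s) (i : ℕ) : s i ≤ 1 := by
  obtain ⟨h0, -, hsum, hle⟩ := hs
  exact le_trans (Summable.le_tsum hsum i (fun j _ => h0 j)) hle

lemma memPm_summable_shift {s : ℕ → ℝ} (hs : MemPm s) : Summable fun i => s (i+1) :=
  (summable_nat_add_iff 1).2 hs.2.2.1

lemma memPm_summable_sq {s : ℕ → ℝ} (hs : MemPm s) : Summable fun i => s (i+1)^2 := by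
  refine Summable.of_nonneg_of_le (fun i => sq_nonneg _) (fun i => ?_) (memPm_summable_shift hs)
  have h0 := hs.1 (i+1); have h1 := memPm_le_one hs (i+1)
  nlinarith

lemma memPm_summable_g {s : ℕ → ℝ} (hs : MemPm s) {q : ℝ} (hq : 0 ≤ q) :
    Summable fun i => exp (-(q * s (i+1))) - 1 + q * s (i+1) := by
  refine Summable.of_nonneg_of_le (fun i => gfun_nonneg _) (fun i => ?_)
    ((memPm_summable_sq hs).mul_left (q^2))
  calc exp (-(q * s (i+1))) - 1 + q * s (i+1) ≤ (q * s (i+1))^2 :=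
        gfun_le_sq (mul_nonneg hq (hs.1 _))
    _ = q^2 * s (i+1)^2 := by ring

lemma fterm_le_gterm {x : ℝ} (hx0 : 0 ≤ x) (hx1 : x ≤ 1) (n : ℕ) :
    (n:ℝ) * x - 1 + (1-x)^n ≤ exp (-((n:ℝ) * x)) - 1 + (n:ℝ) * x := by
  have := one_sub_pow_le_exp hx0 hx1 n
  linarith

lemma gterm_le_fterm {x : ℝ} (hx0 : 0 ≤ x) (hx1 : x ≤ 1) (m : ℕ) :
    exp (-(((m:ℝ)+1) * x)) - 1 + ((m:ℝ)+1) * x ≤ ((m:ℝ)+2) * x - 1 + (1-x)^(m+2) := by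
  have := exp_le_add_pow hx0 hx1 m
  linarith

lemma fterm_nonneg {x : ℝ} (hx0 : 0 ≤ x) (hx1 : x ≤ 1) (m : ℕ) :
    0 ≤ ((m:ℝ)+2) * x - 1 + (1-x)^(m+2) :=
  le_trans (gfun_nonneg _) (gterm_le_fterm hx0 hx1 m)

lemma memPm_summable_f {s : ℕ → ℝ} (hs : MemPm s) (n : ℕ) :
    Summable fun i => (n:ℝ) * s (i+1) - 1 + (1 - s (i+1))^n := by
  have key : ∀ i, (n:ℝ) * s (i+1) - 1 + (1 - s (i+1))^n ≤ (n:ℝ)^2 * s (i+1)^2 := by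
    intro i
    calc (n:ℝ) * s (i+1) - 1 + (1 - s (i+1))^n
        ≤ exp (-((n:ℝ) * s (i+1))) - 1 + (n:ℝ) * s (i+1) :=
          fterm_le_gterm (hs.1 _) (memPm_le_one hs _) n
      _ ≤ ((n:ℝ) * s (i+1))^2 := gfun_le_sq (mul_nonneg (Nat.cast_nonneg n) (hs.1 _))
      _ = (n:ℝ)^2 * s (i+1)^2 := by ring
  rcases Nat.lt_or_ge n 2 with hn | hn
  · interval_cases n
    · convert summable_zero with i; push_cast; ring
    · convert summable_zero with i; push_cast; ring
  · obtain ⟨m, rfl⟩ : ∃ m, n = m + 2 := ⟨n - 2, by omega⟩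
    refine Summable.of_nonneg_of_le (fun i => ?_) (fun i => key i)
      ((memPm_summable_sq hs).mul_left (((m+2:ℕ):ℝ)^2))
    · have := fterm_nonneg (hs.1 (i+1)) (memPm_le_one hs (i+1)) m
      push_cast at this ⊢
      convert this using 2 <;> push_cast <;> ring

lemma tsum_eq_toReal {v : ℕ → ℝ} (hnn : ∀ i, 0 ≤ v i) (hsum : Summable v) :
    ∑' i, v i = (∑' i, ENNReal.ofReal (v i)).toReal := by
  rw [← ENNReal.ofReal_tsum_of_nonneg hnn hsum, ENNReal.toReal_ofReal (tsum_nonneg hnn)]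

lemma meas_toReal_tsum {u : ℝ → ℝ} (hu : Measurable u) :
    Measurable fun s : ℕ → ℝ => (∑' i, ENNReal.ofReal (u (s (i+1)))).toReal :=
  ENNReal.measurable_toReal.comp <| Measurable.ennreal_tsum fun i =>
    ENNReal.measurable_ofReal.comp (hu.comp (measurable_pi_apply (i+1)))

lemma ae_memPm {ν : Measure (ℕ → ℝ)} (hν : ν {s | ¬ MemPm s} = 0) :
    ∀ᵐ s ∂ν, MemPm s := hν

lemma aesm_pm {ν : Measure (ℕ → ℝ)} (hν : ν {s | ¬ MemPm s} = 0)
    (u : ℝ → ℝ) (hu : Measurable u) (q : ℝ)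
    (hnn : ∀ x, 0 ≤ x → x ≤ 1 → 0 ≤ u x)
    (hsum : ∀ s, MemPm s → Summable fun i => u (s (i+1))) :
    AEStronglyMeasurable (fun s : ℕ → ℝ => q * s 0 + ∑' i, u (s (i+1))) ν := by
  have : AEMeasurable (fun s : ℕ → ℝ => q * s 0 + ∑' i, u (s (i+1))) ν := by
    refine ⟨fun s => q * s 0 + (∑' i, ENNReal.ofReal (u (s (i+1)))).toReal,
      ((measurable_pi_apply 0).const_mul q).add (meas_toReal_tsum hu), ?_⟩
    filter_upwards [ae_memPm hν] with s hs
    rw [tsum_eq_toReal (fun i => hnn _ (hs.1 _) (memPm_le_one hs _)) (hsum s hs)]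
  exact this.aestronglyMeasurable

lemma integrable_W {ν : Measure (ℕ → ℝ)} (hν : ν {s | ¬ MemPm s} = 0)
    (hint : ∫⁻ s, ENNReal.ofReal (s 0 + ∑' i : ℕ, (s (i + 1)) ^ 2) ∂ν ≠ ⊤) :
    Integrable (fun s : ℕ → ℝ => s 0 + ∑' i : ℕ, (s (i + 1)) ^ 2) ν := by
  have hsm : AEStronglyMeasurable (fun s : ℕ → ℝ => s 0 + ∑' i : ℕ, (s (i + 1)) ^ 2) ν := by
    have := aesm_pm hν (fun x => x^2) (measurable_id.pow_const 2) 1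
      (fun x hx _ => sq_nonneg x) (fun s hs => memPm_summable_sq hs)
    simpa using this
  refine ⟨hsm, ?_⟩
  rw [hasFiniteIntegral_iff_ofReal ?_]
  · exact hint.lt_top
  · filter_upwards [ae_memPm hν] with s hs
    exact add_nonneg (hs.1 0) (tsum_nonneg fun i => sq_nonneg _)

lemma integrable_pm {ν : Measure (ℕ → ℝ)} (hν : ν {s | ¬ MemPm s} = 0)
    (hint : ∫⁻ s, ENNReal.ofReal (s 0 + ∑' i : ℕ, (s (i + 1)) ^ 2) ∂ν ≠ ⊤)
    (u : ℝ → ℝ) (hu : Measurable u) (q C : ℝ) (hq : 0 ≤ q) (hC : 0 ≤ C)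
    (hnn : ∀ x, 0 ≤ x → x ≤ 1 → 0 ≤ u x)
    (hb : ∀ x, 0 ≤ x → x ≤ 1 → u x ≤ C * x^2)
    (hsum : ∀ s, MemPm s → Summable fun i => u (s (i+1))) :
    Integrable (fun s : ℕ → ℝ => q * s 0 + ∑' i, u (s (i+1))) ν := by
  refine Integrable.mono' (((integrable_W hν hint).const_mul (q + C)))
    (aesm_pm hν u hu q hnn hsum) ?_
  filter_upwards [ae_memPm hν] with s hs
  have h0 : 0 ≤ s 0 := hs.1 0
  have hT0 : 0 ≤ ∑' i, s (i+1)^2 := tsum_nonneg fun i => sq_nonneg _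
  have htnn : ∀ i, 0 ≤ u (s (i+1)) := fun i => hnn _ (hs.1 _) (memPm_le_one hs _)
  have hle : ∑' i, u (s (i+1)) ≤ C * ∑' i, s (i+1)^2 := by
    rw [← tsum_mul_left]
    exact Summable.tsum_le_tsum (fun i => hb _ (hs.1 _) (memPm_le_one hs _)) (hsum s hs)
      ((memPm_summable_sq hs).mul_left C)
  have hnn2 : 0 ≤ q * s 0 + ∑' i, u (s (i+1)) :=
    add_nonneg (mul_nonneg hq h0) (tsum_nonneg htnn)
  rw [Real.norm_of_nonneg hnn2]
  nlinarith

lemma gfun_pos {y : ℝ} (hy : 0 < y) : 0 < exp (-y) - 1 + y := by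
  have := Real.add_one_lt_exp (x := -y) (by linarith)
  linarith

section main
variable {ν : Measure (ℕ → ℝ)}

lemma integrable_G (hν : ν {s | ¬ MemPm s} = 0)
    (hint : ∫⁻ s, ENNReal.ofReal (s 0 + ∑' i : ℕ, (s (i + 1)) ^ 2) ∂ν ≠ ⊤)
    {q : ℝ} (hq : 0 ≤ q) :
    Integrable (fun s : ℕ → ℝ =>
      q * s 0 + ∑' i : ℕ, (Real.exp (-(q * s (i + 1))) - 1 + q * s (i + 1))) ν := by
  exact integrable_pm hν hint (fun x => Real.exp (-(q * x)) - 1 + q * x)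
    (by fun_prop) q (q^2) hq (sq_nonneg q)
    (fun x hx _ => gfun_nonneg _)
    (fun x hx _ => by
      have := gfun_le_sq (mul_nonneg hq hx)
      calc Real.exp (-(q * x)) - 1 + q * x ≤ (q*x)^2 := this
        _ = q^2 * x^2 := by ring)
    (fun s hs => memPm_summable_g hs hq)

lemma integrable_F (hν : ν {s | ¬ MemPm s} = 0)
    (hint : ∫⁻ s, ENNReal.ofReal (s 0 + ∑' i : ℕ, (s (i + 1)) ^ 2) ∂ν ≠ ⊤)
    (m : ℕ) :
    Integrable (fun s : ℕ → ℝ =>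
      ((m+2:ℕ) : ℝ) * s 0 + ∑' i : ℕ,
        (((m+2:ℕ) : ℝ) * s (i + 1) - 1 + (1 - s (i + 1)) ^ (m+2:ℕ))) ν := by
  exact integrable_pm hν hint (fun x => ((m+2:ℕ) : ℝ) * x - 1 + (1 - x) ^ (m+2:ℕ))
    (by fun_prop) ((m+2:ℕ) : ℝ) (((m+2:ℕ):ℝ)^2) (Nat.cast_nonneg _) (sq_nonneg _)
    (fun x hx hx1 => by
      have := fterm_nonneg hx hx1 m
      push_cast at this ⊢; convert this using 2 <;> push_cast <;> ring)
    (fun x hx hx1 => by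
      calc ((m+2:ℕ) : ℝ) * x - 1 + (1 - x) ^ (m+2:ℕ)
          ≤ exp (-(((m+2:ℕ):ℝ) * x)) - 1 + ((m+2:ℕ):ℝ) * x := fterm_le_gterm hx hx1 (m+2)
        _ ≤ (((m+2:ℕ):ℝ) * x)^2 := gfun_le_sq (mul_nonneg (Nat.cast_nonneg _) hx)
        _ = (((m+2:ℕ):ℝ))^2 * x^2 := by ring)
    (fun s hs => memPm_summable_f hs (m+2))

lemma psi_mono (hc₀ : 0 ≤ c₀) (hc₁ : 0 ≤ c₁) (hν : ν {s | ¬ MemPm s} = 0)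
    (hint : ∫⁻ s, ENNReal.ofReal (s 0 + ∑' i : ℕ, (s (i + 1)) ^ 2) ∂ν ≠ ⊤)
    {p q : ℝ} (hp : 0 ≤ p) (hpq : p ≤ q) :
    Psi c₀ c₁ ν p ≤ Psi c₀ c₁ ν q := by
  have hq : 0 ≤ q := hp.trans hpq
  unfold Psi
  have hI : (∫ s, (p * s 0 + ∑' i : ℕ, (Real.exp (-(p * s (i + 1))) - 1 + p * s (i + 1))) ∂ν)
      ≤ ∫ s, (q * s 0 + ∑' i : ℕ, (Real.exp (-(q * s (i + 1))) - 1 + q * s (i + 1))) ∂ν := by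
    refine integral_mono_ae (integrable_G hν hint hp) (integrable_G hν hint hq) ?_
    filter_upwards [ae_memPm hν] with s hs
    refine add_le_add (mul_le_mul_of_nonneg_right hpq (hs.1 0)) ?_
    refine Summable.tsum_le_tsum (fun i => ?_) (memPm_summable_g hs hp) (memPm_summable_g hs hq)
    exact gfun_mono (mul_le_mul_of_nonneg_right hpq (hs.1 _)) (mul_nonneg hp (hs.1 _))
  have h1 : c₀ * p ≤ c₀ * q := mul_le_mul_of_nonneg_left hpq hc₀
  have h2 : c₁ / 2 * p ^ 2 ≤ c₁ / 2 * q ^ 2 := by have := mul_le_mul_of_nonneg_left (pow_le_pow_left₀ hp hpq 2) (by linarith : (0:ℝ) ≤ c₁/2); linarith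
  linarith

lemma psi_pos (hc₀ : 0 ≤ c₀) (hc₁ : 0 ≤ c₁) (hν : ν {s | ¬ MemPm s} = 0)
    (hint : ∫⁻ s, ENNReal.ofReal (s 0 + ∑' i : ℕ, (s (i + 1)) ^ 2) ∂ν ≠ ⊤)
    (hzero : ν {s | ∀ i, s i = 0} = 0)
    (hnontriv : ¬(c₀ = 0 ∧ c₁ = 0 ∧ ν = 0))
    {q : ℝ} (hq : 0 < q) : 0 < Psi c₀ c₁ ν q := by
  set G := fun s : ℕ → ℝ =>
    q * s 0 + ∑' i : ℕ, (Real.exp (-(q * s (i + 1))) - 1 + q * s (i + 1)) with hG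
  have hGnn : 0 ≤ᵐ[ν] G := by
    filter_upwards [ae_memPm hν] with s hs
    exact add_nonneg (mul_nonneg hq.le (hs.1 0)) (tsum_nonneg fun i => gfun_nonneg _)
  have hGint : Integrable G ν := integrable_G hν hint hq.le
  have hI0 : 0 ≤ ∫ s, G s ∂ν := integral_nonneg_of_ae hGnn
  rcases eq_or_lt_of_le hc₀ with h0 | h0
  · rcases eq_or_lt_of_le hc₁ with h1 | h1
    · have hνne : ν ≠ 0 := fun hν0 => hnontriv ⟨h0.symm, h1.symm, hν0⟩
      have hIpos : 0 < ∫ s, G s ∂ν := by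
        rw [integral_pos_iff_support_of_nonneg_ae hGnn hGint]
        have hsub : (Function.support G)ᶜ ⊆ {s | ¬ MemPm s} ∪ {s | ∀ i, s i = 0} := by
          intro s hsG
          by_contra hmem
          simp only [Set.mem_union, Set.mem_setOf_eq, not_or, not_not] at hmem
          obtain ⟨hs, hnz⟩ := hmem
          obtain ⟨i, hi⟩ := not_forall.1 hnz
          have hipos : 0 < s i := lt_of_le_of_ne (hs.1 i) (Ne.symm hi)
          have : 0 < G s := by
            rcases i with _ | j
            · exact add_pos_of_pos_of_nonneg (mul_pos hq hipos)
                (tsum_nonneg fun i => gfun_nonneg _)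
            · refine add_pos_of_nonneg_of_pos (mul_nonneg hq.le (hs.1 0)) ?_
              have hterm : 0 < Real.exp (-(q * s (j+1))) - 1 + q * s (j+1) :=
                gfun_pos (mul_pos hq hipos)
              refine lt_of_lt_of_le hterm ?_
              exact Summable.le_tsum (memPm_summable_g hs hq.le) j (fun k _ => gfun_nonneg _)
          exact hsG (Function.mem_support.2 this.ne')
        have hcnull : ν (Function.support G)ᶜ = 0 :=
          measure_mono_null hsub (measure_union_null hν hzero)
        refine pos_iff_ne_zero.2 fun hs0 => hνne ?_
        rw [← Measure.measure_univ_eq_zero]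
        have := measure_union_le (μ := ν) (Function.support G) (Function.support G)ᶜ
        rw [Set.union_compl_self, hs0, hcnull] at this
        simpa using this
      have : Psi c₀ c₁ ν q = ∫ s, G s ∂ν := by
        rw [Psi, ← h0, ← h1, hG]; ring_nf
      rw [this]; exact hIpos
    · have : 0 < c₁ / 2 * q ^ 2 := by positivity
      have h1' : 0 ≤ c₀ * q := mul_nonneg hc₀ hq.le
      rw [Psi]; linarith
  · have : 0 < c₀ * q := mul_pos h0 hq
    have h2' : 0 ≤ c₁ / 2 * q ^ 2 := by positivity
    rw [Psi]; linarith

end main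

section main2
variable {ν : Measure (ℕ → ℝ)} {c₀ c₁ : ℝ}

lemma psi_le_phi (hc₀ : 0 ≤ c₀) (hc₁ : 0 ≤ c₁) (hν : ν {s | ¬ MemPm s} = 0)
    (hint : ∫⁻ s, ENNReal.ofReal (s 0 + ∑' i : ℕ, (s (i + 1)) ^ 2) ∂ν ≠ ⊤) (m : ℕ) :
    Psi c₀ c₁ ν ((m:ℝ)+1) ≤ Phi c₀ c₁ ν (m+2) := by
  rw [Psi, Phi]
  have hI : (∫ s, (((m:ℝ)+1) * s 0 + ∑' i : ℕ,
        (Real.exp (-(((m:ℝ)+1) * s (i + 1))) - 1 + ((m:ℝ)+1) * s (i + 1))) ∂ν)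
      ≤ ∫ s, (((m+2:ℕ):ℝ) * s 0 + ∑' i : ℕ,
        (((m+2:ℕ):ℝ) * s (i + 1) - 1 + (1 - s (i + 1)) ^ (m+2:ℕ))) ∂ν := by
    refine integral_mono_ae (integrable_G hν hint (by positivity)) (integrable_F hν hint m) ?_
    filter_upwards [ae_memPm hν] with s hs
    refine add_le_add (mul_le_mul_of_nonneg_right (by push_cast; linarith) (hs.1 0)) ?_
    refine Summable.tsum_le_tsum (fun i => ?_) (memPm_summable_g hs (by positivity))
      (memPm_summable_f hs (m+2))
    have := gterm_le_fterm (hs.1 (i+1)) (memPm_le_one hs (i+1)) m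
    push_cast at this ⊢
    linarith
  have h1 : c₀ * ((m:ℝ)+1) ≤ c₀ * ((m+2:ℕ):ℝ) := by
    apply mul_le_mul_of_nonneg_left _ hc₀; push_cast; linarith
  have h2 : c₁ / 2 * ((m:ℝ)+1) ^ 2 ≤ c₁ / 2 * ((m+2:ℕ):ℝ) * (((m+2:ℕ):ℝ) - 1) := by
    have hm : (0:ℝ) ≤ (m:ℝ) := Nat.cast_nonneg m
    push_cast
    nlinarith
  exact add_le_add (add_le_add h1 h2) hI

lemma phi_le_psi (hc₀ : 0 ≤ c₀) (hc₁ : 0 ≤ c₁) (hν : ν {s | ¬ MemPm s} = 0)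
    (hint : ∫⁻ s, ENNReal.ofReal (s 0 + ∑' i : ℕ, (s (i + 1)) ^ 2) ∂ν ≠ ⊤) (m : ℕ) :
    Phi c₀ c₁ ν (m+2) ≤ Psi c₀ c₁ ν ((m:ℝ)+2) := by
  rw [Psi, Phi]
  have hI : (∫ s, (((m+2:ℕ):ℝ) * s 0 + ∑' i : ℕ,
        (((m+2:ℕ):ℝ) * s (i + 1) - 1 + (1 - s (i + 1)) ^ (m+2:ℕ))) ∂ν)
      ≤ ∫ s, (((m:ℝ)+2) * s 0 + ∑' i : ℕ,
        (Real.exp (-(((m:ℝ)+2) * s (i + 1))) - 1 + ((m:ℝ)+2) * s (i + 1))) ∂ν := by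
    refine integral_mono_ae (integrable_F hν hint m) (integrable_G hν hint (by positivity)) ?_
    filter_upwards [ae_memPm hν] with s hs
    refine add_le_add (mul_le_mul_of_nonneg_right (by push_cast; linarith) (hs.1 0)) ?_
    refine Summable.tsum_le_tsum (fun i => ?_) (memPm_summable_f hs (m+2))
      (memPm_summable_g hs (by positivity))
    have := fterm_le_gterm (hs.1 (i+1)) (memPm_le_one hs (i+1)) (m+2)
    push_cast at this ⊢
    linarith
  have h1 : c₀ * ((m+2:ℕ):ℝ) ≤ c₀ * ((m:ℝ)+2) := by push_cast; exact le_refl _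
  have h2 : c₁ / 2 * ((m+2:ℕ):ℝ) * (((m+2:ℕ):ℝ) - 1) ≤ c₁ / 2 * ((m:ℝ)+2) ^ 2 := by
    have hm : (0:ℝ) ≤ (m:ℝ) := Nat.cast_nonneg m
    push_cast
    nlinarith
  exact add_le_add (add_le_add h1 h2) hI

end main2

section main3
variable {ν : Measure (ℕ → ℝ)} {c₀ c₁ : ℝ}

lemma summable_phi_iff (hc₀ : 0 ≤ c₀) (hc₁ : 0 ≤ c₁) (hν : ν {s | ¬ MemPm s} = 0)
    (hint : ∫⁻ s, ENNReal.ofReal (s 0 + ∑' i : ℕ, (s (i + 1)) ^ 2) ∂ν ≠ ⊤)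
    (hzero : ν {s | ∀ i, s i = 0} = 0)
    (hnontriv : ¬(c₀ = 0 ∧ c₁ = 0 ∧ ν = 0)) :
    (Summable fun n : ℕ => 1 / Phi c₀ c₁ ν (n + 2)) ↔
      Summable fun n : ℕ => 1 / Psi c₀ c₁ ν ((n:ℝ)+2) := by
  have hψpos : ∀ q : ℝ, 0 < q → 0 < Psi c₀ c₁ ν q :=
    fun q hq => psi_pos hc₀ hc₁ hν hint hzero hnontriv hq
  have hφpos : ∀ n : ℕ, 0 < Phi c₀ c₁ ν (n+2) := fun n =>
    lt_of_lt_of_le (hψpos _ (by positivity)) (psi_le_phi hc₀ hc₁ hν hint n)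
  constructor
  · intro h
    refine Summable.of_nonneg_of_le
      (fun n => one_div_nonneg.2 (hψpos _ (by positivity)).le)
      (fun n => one_div_le_one_div_of_le (hφpos n) (phi_le_psi hc₀ hc₁ hν hint n)) h
  · intro h
    have h' : Summable fun n : ℕ => 1 / Psi c₀ c₁ ν ((n:ℝ)+1) := by
      refine (summable_nat_add_iff 1).1 ?_
      have he : (fun n : ℕ => 1 / Psi c₀ c₁ ν (((n+1:ℕ):ℝ)+1))
          = fun n : ℕ => 1 / Psi c₀ c₁ ν ((n:ℝ)+2) := by
        funext n; congr 1; push_cast; ring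
      rw [he]; exact h
    exact Summable.of_nonneg_of_le (fun n => one_div_nonneg.2 (hφpos n).le)
      (fun n => one_div_le_one_div_of_le (hψpos _ (by positivity))
        (psi_le_phi hc₀ hc₁ hν hint n)) h'

lemma summable_psi_iff (hc₀ : 0 ≤ c₀) (hc₁ : 0 ≤ c₁) (hν : ν {s | ¬ MemPm s} = 0)
    (hint : ∫⁻ s, ENNReal.ofReal (s 0 + ∑' i : ℕ, (s (i + 1)) ^ 2) ∂ν ≠ ⊤)
    (hzero : ν {s | ∀ i, s i = 0} = 0)
    (hnontriv : ¬(c₀ = 0 ∧ c₁ = 0 ∧ ν = 0)) :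
    (Summable fun n : ℕ => 1 / Psi c₀ c₁ ν ((n:ℝ)+2)) ↔
      IntegrableOn (fun q : ℝ => 1 / Psi c₀ c₁ ν q) (Set.Ici 2) volume := by
  have hψpos : ∀ q : ℝ, 0 < q → 0 < Psi c₀ c₁ ν q :=
    fun q hq => psi_pos hc₀ hc₁ hν hint hzero hnontriv hq
  set f : ℝ → ℝ := fun q => 1 / Psi c₀ c₁ ν q with hf
  have hpos : ∀ q : ℝ, 2 ≤ q → 0 < f q := fun q hq => one_div_pos.2 (hψpos q (by linarith))
  have hanti : AntitoneOn f (Set.Ici 2) := by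
    intro p hp q hq hpq
    have hp2 : (2:ℝ) ≤ p := hp
    exact one_div_le_one_div_of_le (hψpos p (by linarith))
      (psi_mono hc₀ hc₁ hν hint (by linarith) hpq)
  have hIcc : ∀ n : ℕ, AntitoneOn f (Set.Icc 2 (2+(n:ℝ))) :=
    fun n => hanti.mono Set.Icc_subset_Ici_self
  have hIoc : ∀ n : ℕ, IntegrableOn f (Set.Ioc 2 (2+(n:ℝ))) volume := fun n =>
    (AntitoneOn.integrableOn_isCompact isCompact_Icc (hIcc n)).mono_set Set.Ioc_subset_Icc_self
  have hnorm : ∀ n : ℕ, (∫ x in (2:ℝ)..(2+(n:ℝ)), ‖f x‖) = ∫ x in (2:ℝ)..(2+(n:ℝ)), f x := by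
    intro n
    apply intervalIntegral.integral_congr
    intro x hx
    rw [Set.uIcc_of_le (le_add_of_nonneg_right (Nat.cast_nonneg n) : (2:ℝ) ≤ 2+(n:ℝ))] at hx
    exact Real.norm_of_nonneg (hpos x hx.1).le
  constructor
  · intro h
    rw [integrableOn_Ici_iff_integrableOn_Ioi]
    refine integrableOn_Ioi_of_intervalIntegral_norm_bounded
      (∑' n : ℕ, 1 / Psi c₀ c₁ ν ((n:ℝ)+2)) 2 hIoc
      (Filter.tendsto_atTop_add_const_left _ 2 tendsto_natCast_atTop_atTop) ?_
    filter_upwards with n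
    rw [hnorm n]
    calc (∫ x in (2:ℝ)..(2+(n:ℝ)), f x) ≤ ∑ i ∈ Finset.range n, f (2+(i:ℝ)) :=
          AntitoneOn.integral_le_sum (hIcc n)
      _ = ∑ i ∈ Finset.range n, 1 / Psi c₀ c₁ ν ((i:ℝ)+2) := by
          refine Finset.sum_congr rfl fun i _ => ?_
          rw [hf]; congr 1; ring
      _ ≤ ∑' i : ℕ, 1 / Psi c₀ c₁ ν ((i:ℝ)+2) := Summable.sum_le_tsum _
          (fun i _ => one_div_nonneg.2 (hψpos _ (by positivity)).le) h
  · intro h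
    have key : ∀ n : ℕ, ∑ i ∈ Finset.range n, 1 / Psi c₀ c₁ ν ((i:ℝ)+3)
        ≤ ∫ x in Set.Ici (2:ℝ), f x := by
      intro n
      have h1 : (∑ i ∈ Finset.range n, f (2 + ((i+1:ℕ):ℝ))) ≤ ∫ x in (2:ℝ)..(2+(n:ℝ)), f x :=
        AntitoneOn.sum_le_integral (hIcc n)
      have h2 : (∫ x in (2:ℝ)..(2+(n:ℝ)), f x) ≤ ∫ x in Set.Ici (2:ℝ), f x := by
        rw [intervalIntegral.integral_of_le (le_add_of_nonneg_right (Nat.cast_nonneg n) : (2:ℝ) ≤ 2+(n:ℝ))]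
        refine setIntegral_mono_set h
          ((ae_restrict_iff' measurableSet_Ici).2 (ae_of_all _ fun x hx => (hpos x hx).le))
          (HasSubset.Subset.eventuallyLE (fun x hx => le_of_lt hx.1))
      have h0 : (∑ i ∈ Finset.range n, 1 / Psi c₀ c₁ ν ((i:ℝ)+3))
          = ∑ i ∈ Finset.range n, f (2 + ((i+1:ℕ):ℝ)) := by
        refine Finset.sum_congr rfl fun i _ => ?_
        rw [hf]; congr 1; push_cast; ring
      rw [h0]; exact le_trans h1 h2
    have h3 : Summable fun n : ℕ => 1 / Psi c₀ c₁ ν ((n:ℝ)+3) :=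
      summable_of_sum_range_le (fun n => one_div_nonneg.2 (hψpos _ (by positivity)).le) key
    refine (summable_nat_add_iff 1).1 ?_
    have he : (fun n : ℕ => 1 / Psi c₀ c₁ ν (((n+1:ℕ):ℝ)+2))
        = fun n : ℕ => 1 / Psi c₀ c₁ ν ((n:ℝ)+3) := by
      funext n; congr 1; push_cast; ring
    rw [he]; exact h3

end main3

end AuxPhiPsi

/-- Let `c₀, c₁ ≥ 0` and let `ν` be a measure carried on `P_m` with
`∫ (s₀ + Σ_{i≥1} s_i²) ν(ds) < ∞`.  Assume moreover that `ν` gives no mass to the zero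
sequence and that `c₀`, `c₁` and `ν` are not all zero (so that `Φ(n) > 0` for every
integer `n ≥ 2` and `Ψ(q) > 0` for every real `q ≥ 2`).  Then the series
`Σ_{n≥2} 1/Φ(n)` converges if and only if the integral `∫_2^∞ dq/Ψ(q)` converges. -/
theorem Phi_series_iff_Psi_integral
    (c₀ c₁ : ℝ) (hc₀ : 0 ≤ c₀) (hc₁ : 0 ≤ c₁)
    (ν : Measure (ℕ → ℝ)) (hν : ν {s | ¬ MemPm s} = 0)
    (hint : ∫⁻ s, ENNReal.ofReal (s 0 + ∑' i : ℕ, (s (i + 1)) ^ 2) ∂ν ≠ ⊤)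
    (hzero : ν {s | ∀ i, s i = 0} = 0)
    (hnontriv : ¬(c₀ = 0 ∧ c₁ = 0 ∧ ν = 0)) :
    (Summable fun n : ℕ => 1 / Phi c₀ c₁ ν (n + 2)) ↔
      IntegrableOn (fun q : ℝ => 1 / Psi c₀ c₁ ν q) (Set.Ici 2) volume := by
  rw [summable_phi_iff hc₀ hc₁ hν hint hzero hnontriv]
  exact summable_psi_iff hc₀ hc₁ hν hint hzero hnontriv
end
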